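/- Let I = {m, …, m+k−1} ⊆ {1,…,n}, let g ∈ A_I, and let 0 ≤ i_0, j_0 ≤ n with m ≤ i_0+1 ≤ m+k and m ≤ j_0+1 ≤ m+k. Then a_{i_0}^{-1} g a_{j_0} lies in the conjugate subgroup a_{m−1}^{-1} A_I a_{m−1}; explicitly, a_{i_0}^{-1} g a_{j_0} = a_{m−1}^{-1} g' a_{m−1} where g' = (σ_m^{-1} ⋯ σ_{i_0}^{-1}) g (σ_{j_0} ⋯ σ_m) ∈ A_I. -/

import Mathlib

/-- Braid relations on generators σ_1,…,σ_n (0-indexed by `Fin n`). -/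
def braidRels (n : ℕ) : Set (FreeGroup (Fin n)) :=
  { r | (∃ i j : Fin n, (i : ℕ) + 2 ≤ (j : ℕ) ∧
          r = FreeGroup.of i * FreeGroup.of j * (FreeGroup.of i)⁻¹ * (FreeGroup.of j)⁻¹) ∨
        (∃ i j : Fin n, (i : ℕ) + 1 = (j : ℕ) ∧
          r = FreeGroup.of i * FreeGroup.of j * FreeGroup.of i *
              (FreeGroup.of j)⁻¹ * (FreeGroup.of i)⁻¹ * (FreeGroup.of j)⁻¹) }

/-- The braid group on `n+1` strands. -/
abbrev BraidGroup (n : ℕ) := PresentedGroup (braidRels n)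

/-- The Artin generator σ_j (1-indexed, `1 ≤ j ≤ n`); junk value `1` outside that range. -/
noncomputable def σb {n : ℕ} (j : ℕ) : BraidGroup n :=
  if h : 1 ≤ j ∧ j ≤ n then PresentedGroup.of (⟨j - 1, by omega⟩ : Fin n) else 1

/-- a_i = σ_i σ_{i-1} ⋯ σ_1, with a_0 = 1. -/
noncomputable def abr {n : ℕ} : ℕ → BraidGroup n
  | 0 => 1
  | i + 1 => σb (i + 1) * abr i

/-- transposition (i+1, i+2) (1-based) in S_{n+1} -/
def swapGen {n : ℕ} (i : Fin n) : Equiv.Perm (Fin (n + 1)) :=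
  Equiv.swap i.castSucc i.succ

lemma swap_disjoint_commute {N : ℕ} {a b c d : Fin N} (h1 : a ≠ c) (h2 : a ≠ d) (h3 : b ≠ c)
    (h4 : b ≠ d) : Commute (Equiv.swap a b) (Equiv.swap c d) := by
  apply Equiv.Perm.Disjoint.commute
  intro x
  by_cases hxa : x = a
  · subst hxa; right; exact Equiv.swap_apply_of_ne_of_ne h1 h2
  by_cases hxb : x = b
  · subst hxb; right; exact Equiv.swap_apply_of_ne_of_ne h3 h4
  · left; exact Equiv.swap_apply_of_ne_of_ne hxa hxb

lemma swap_braid {N : ℕ} (a b c : Fin N) (hab : a ≠ b) (hbc : b ≠ c) (hac : a ≠ c) :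
    Equiv.swap a b * Equiv.swap b c * Equiv.swap a b =
      Equiv.swap b c * Equiv.swap a b * Equiv.swap b c := by
  have h1 : Equiv.swap a b * Equiv.swap b c * Equiv.swap a b = Equiv.swap a c := by
    rw [Equiv.swap_comm a b, Equiv.swap_comm b c]
    exact Equiv.swap_mul_swap_mul_swap hbc.symm hac.symm
  have h2 : Equiv.swap b c * Equiv.swap a b * Equiv.swap b c = Equiv.swap c a := by
    exact Equiv.swap_mul_swap_mul_swap hab hac
  rw [h1, h2, Equiv.swap_comm]

lemma braid_rels_perm (n : ℕ) : ∀ r ∈ braidRels n, FreeGroup.lift (swapGen (n := n)) r = 1 := by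
  rintro r (⟨i, j, hij, rfl⟩ | ⟨i, j, hij, rfl⟩) <;>
    simp only [map_mul, map_inv, FreeGroup.lift_apply_of]
  · have hc : Commute (swapGen (n := n) i) (swapGen j) := by
      apply swap_disjoint_commute <;>
        exact Fin.ne_of_val_ne (by simp only [Fin.val_succ, Fin.coe_castSucc]; omega)
    rw [hc.eq]; group
  · have : j.castSucc = i.succ := by
      apply Fin.val_injective; simp only [Fin.val_succ, Fin.coe_castSucc]; omega
    have hb := swap_braid (N := n+1) i.castSucc i.succ j.succ
      (Fin.ne_of_val_ne (by simp only [Fin.val_succ, Fin.coe_castSucc]; omega)) (Fin.ne_of_val_ne (by simp only [Fin.val_succ, Fin.coe_castSucc]; omega))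
      (Fin.ne_of_val_ne (by simp only [Fin.val_succ, Fin.coe_castSucc]; omega))
    unfold swapGen
    rw [this, hb]; group

/-- The canonical projection from the braid group onto the symmetric group S_{n+1}. -/
noncomputable def πb {n : ℕ} : BraidGroup n →* Equiv.Perm (Fin (n + 1)) :=
  PresentedGroup.toGroup (braid_rels_perm n)

/-- The standard parabolic subgroup generated by σ_m, …, σ_{m+k-1}. -/
noncomputable def AIb (n m k : ℕ) : Subgroup (BraidGroup n) :=
  Subgroup.closure { x | ∃ j, m ≤ j ∧ j ≤ m + k - 1 ∧ x = σb j }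


lemma abr_decomp {n : ℕ} (m i0 : ℕ) (hm : 1 ≤ m) (hi : m ≤ i0 + 1) :
    abr (n := n) i0 =
      ((List.range' m (i0 + 1 - m)).reverse.map (fun j => σb (n := n) j)).prod * abr (m - 1) := by
  induction i0 with
  | zero =>
    have : m = 1 := by omega
    subst this; simp [abr]
  | succ i ih =>
    rcases Nat.eq_or_lt_of_le hi with h | h
    · have : m = i + 2 := by omega
      subst this
      simp [abr]
    · have hmi : m ≤ i + 1 := by omega
      have hr : i + 1 + 1 - m = (i + 1 - m) + 1 := by omega
      rw [hr, List.range'_concat]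
      rw [show m + 1 * (i + 1 - m) = i + 1 by omega, List.reverse_append,
        List.reverse_singleton, List.singleton_append, List.map_cons, List.prod_cons,
        show abr (n := n) (i + 1) = σb (i + 1) * abr i from rfl, ih hmi]
      group

lemma prod_inv_eq {n : ℕ} (l : List ℕ) :
    ((l.reverse.map (fun j => σb (n := n) j)).prod)⁻¹ =
      (l.map (fun j => (σb (n := n) j)⁻¹)).prod := by
  induction l with
  | nil => simp
  | cons a t ih =>
    simp only [List.reverse_cons, List.map_append, List.prod_append, List.map_cons,
      List.map_nil, List.prod_cons, List.prod_nil, mul_inv_rev, mul_one]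
    rw [ih]

lemma sigma_mem_AIb {n m k : ℕ} {j : ℕ} (h1 : m ≤ j) (h2 : j ≤ m + k - 1) :
    σb (n := n) j ∈ AIb n m k :=
  Subgroup.subset_closure ⟨j, h1, h2, rfl⟩

lemma prod_mem_AIb {n m k : ℕ} (t : ℕ) (hm : 1 ≤ m) (hk : 1 ≤ k) (ht : t ≤ k) :
    ((List.range' m t).reverse.map (fun j => σb (n := n) j)).prod ∈ AIb n m k := by
  apply Subgroup.list_prod_mem
  intro x hx
  simp only [List.mem_map, List.mem_reverse, List.mem_range'_1] at hx
  obtain ⟨j, ⟨hj1, hj2⟩, rfl⟩ := hx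
  exact sigma_mem_AIb hj1 (by omega)

lemma prod_inv_mem_AIb {n m k : ℕ} (t : ℕ) (hm : 1 ≤ m) (hk : 1 ≤ k) (ht : t ≤ k) :
    ((List.range' m t).map (fun j => (σb (n := n) j)⁻¹)).prod ∈ AIb n m k := by
  rw [← prod_inv_eq]
  exact inv_mem (prod_mem_AIb t hm hk ht)

theorem lemma_technical_3 (n m k i0 j0 : ℕ) (hm : 1 ≤ m) (hk : 1 ≤ k) (hmk : m + k - 1 ≤ n)
    (hi0 : i0 ≤ n) (hj0 : j0 ≤ n)
    (hi1 : m ≤ i0 + 1) (hi2 : i0 + 1 ≤ m + k) (hj1 : m ≤ j0 + 1) (hj2 : j0 + 1 ≤ m + k)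
    (g : BraidGroup n) (hg : g ∈ AIb n m k) :
    -- g' = (σ_m⁻¹ ⋯ σ_{i0}⁻¹) g (σ_{j0} ⋯ σ_m)
    (((List.range' m (i0 + 1 - m)).map (fun j => (σb (n := n) j)⁻¹)).prod * g *
        ((List.range' m (j0 + 1 - m)).reverse.map (fun j => σb (n := n) j)).prod) ∈ AIb n m k ∧
    (abr (n := n) i0)⁻¹ * g * abr j0 =
      (abr (m - 1))⁻¹ *
        (((List.range' m (i0 + 1 - m)).map (fun j => (σb (n := n) j)⁻¹)).prod * g *
          ((List.range' m (j0 + 1 - m)).reverse.map (fun j => σb (n := n) j)).prod) *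
        abr (m - 1) := by
  constructor
  · exact mul_mem (mul_mem (prod_inv_mem_AIb _ hm hk (by omega)) hg)
      (prod_mem_AIb _ hm hk (by omega))
  · rw [abr_decomp m i0 hm hi1, abr_decomp m j0 hm hj1]
    rw [mul_inv_rev, prod_inv_eq]
    group
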